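/- Let f : ℝⁿ → ℝ be differentiable with L-Lipschitz-continuous gradient (L > 0), ψ : ℝⁿ → ℝ ∪ {+∞} convex, proper, and closed, F = f + ψ, and Q(d) = ∇f(x)ᵀd + (1/2)dᵀHd + ψ(x+d) − ψ(x) σ-strongly convex for some σ > 0. Let m be the smallest eigenvalue of the symmetric matrix H and suppose (1 − √η)σ + (1 + √η)m > 0 for some η ∈ [0,1). If d satisfies Q(d) ≤ (1 − η)Q*, and γ ∈ (0,1), then for every step size α with 0 < α ≤ min{1, (1 − γ)·((1 − √η)σ + (1 + √η)m)/(L(1 + √η))}, the Armijo sufficient-decrease condition F(x + αd) ≤ F(x) + αγΔ holds, where Δ = ∇f(x)ᵀd + ψ(x+d) − ψ(x). In particular, a backtracking line search that starts at α = 1 and multiplies α by β ∈ (0,1) terminates finitely with α ≥ min{1, β(1 − γ)·((1 − √η)σ + (1 + √η)m)/(L(1 + √η))}. -/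

import Mathlib

/-
Setting: minimize F = f + ψ over ℝⁿ (modeled as `EuclideanSpace ℝ (Fin n)`), where
f : ℝⁿ → ℝ is smooth and ψ : ℝⁿ → ℝ ∪ {+∞} (modeled as `EReal`-valued, never ⊥)
is convex, proper and closed.  The quadratic model at x with symmetric operator H is
Q(d) = ⟪∇f(x), d⟫ + (1/2)⟪H d, d⟫ + ψ(x+d) − ψ(x), and Δ(d) = ⟪∇f(x), d⟫ + ψ(x+d) − ψ(x).
-/

open scoped RealInnerProductSpace
open Set Filter Topology

noncomputable section

/-- Convexity for extended-real-valued functions (values in ℝ ∪ {±∞}). -/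
def ConvexE {n : ℕ} (g : EuclideanSpace ℝ (Fin n) → EReal) : Prop :=
  ∀ x y : EuclideanSpace ℝ (Fin n), ∀ a b : ℝ, 0 ≤ a → 0 ≤ b → a + b = 1 →
    g (a • x + b • y) ≤ (a : EReal) * g x + (b : EReal) * g y

/-- ψ is proper: it never takes the value −∞ (its values lie in ℝ ∪ {+∞})
and it is finite somewhere. -/
def ProperPsi {n : ℕ} (ψ : EuclideanSpace ℝ (Fin n) → EReal) : Prop :=
  (∀ x, ψ x ≠ ⊥) ∧ ∃ x, ψ x ≠ ⊤

/-- ψ is closed, i.e. lower semicontinuous. -/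
def ClosedPsi {n : ℕ} (ψ : EuclideanSpace ℝ (Fin n) → EReal) : Prop :=
  LowerSemicontinuous ψ

/-- H is a symmetric (self-adjoint) linear operator. -/
def SymmCLM {n : ℕ} (H : EuclideanSpace ℝ (Fin n) →L[ℝ] EuclideanSpace ℝ (Fin n)) : Prop :=
  ∀ u v, ⟪H u, v⟫ = ⟪u, H v⟫

/-- m is the smallest eigenvalue of the symmetric operator H
(characterized as the minimum of the Rayleigh quotient over the unit sphere). -/
def IsSmallestEigenvalue {n : ℕ} (H : EuclideanSpace ℝ (Fin n) →L[ℝ] EuclideanSpace ℝ (Fin n))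
    (m : ℝ) : Prop :=
  IsLeast {r : ℝ | ∃ u : EuclideanSpace ℝ (Fin n), ‖u‖ = 1 ∧ r = ⟪H u, u⟫} m

/-- The objective F = f + ψ (extended-real-valued). -/
def Fm {n : ℕ} (f : EuclideanSpace ℝ (Fin n) → ℝ) (ψ : EuclideanSpace ℝ (Fin n) → EReal)
    (x : EuclideanSpace ℝ (Fin n)) : EReal :=
  (f x : EReal) + ψ x

/-- The quadratic model Q(d) = ∇f(x)ᵀd + (1/2)dᵀHd + ψ(x+d) − ψ(x). -/
def Qm {n : ℕ} (f : EuclideanSpace ℝ (Fin n) → ℝ) (ψ : EuclideanSpace ℝ (Fin n) → EReal)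
    (H : EuclideanSpace ℝ (Fin n) →L[ℝ] EuclideanSpace ℝ (Fin n))
    (x d : EuclideanSpace ℝ (Fin n)) : EReal :=
  ((⟪gradient f x, d⟫ + 1 / 2 * ⟪H d, d⟫ : ℝ) : EReal) + ψ (x + d) - ψ x

/-- Δ(d) = ∇f(x)ᵀd + ψ(x+d) − ψ(x). -/
def Dm {n : ℕ} (f : EuclideanSpace ℝ (Fin n) → ℝ) (ψ : EuclideanSpace ℝ (Fin n) → EReal)
    (x d : EuclideanSpace ℝ (Fin n)) : EReal :=
  ((⟪gradient f x, d⟫ : ℝ) : EReal) + ψ (x + d) - ψ x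

/-- g is σ-strongly convex: g − (σ/2)‖·‖² is convex. -/
def StrongConvexE {n : ℕ} (σ : ℝ) (g : EuclideanSpace ℝ (Fin n) → EReal) : Prop :=
  ConvexE (fun d => g d - ((σ / 2 * ‖d‖ ^ 2 : ℝ) : EReal))

/-- The solution set Ω = argmin F. -/
def SolSet {n : ℕ} (f : EuclideanSpace ℝ (Fin n) → ℝ)
    (ψ : EuclideanSpace ℝ (Fin n) → EReal) : Set (EuclideanSpace ℝ (Fin n)) :=
  {y | ∀ z, Fm f ψ y ≤ Fm f ψ z}


lemma descent_aux {n : ℕ} (f : EuclideanSpace ℝ (Fin n) → ℝ) (L : ℝ) (hL0 : 0 ≤ L)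
    (hf : Differentiable ℝ f)
    (hlip : ∀ y z, ‖gradient f y - gradient f z‖ ≤ L * ‖y - z‖)
    (x v : EuclideanSpace ℝ (Fin n)) :
    f (x + v) ≤ f x + ⟪gradient f x, v⟫ + L / 2 * ‖v‖ ^ 2 := by
  have hgc : Continuous (gradient f) := by
    have : LipschitzWith L.toNNReal (gradient f) := by
      apply LipschitzWith.of_dist_le_mul
      intro y z
      rw [dist_eq_norm, dist_eq_norm]
      simpa [Real.coe_toNNReal L hL0] using hlip y z
    exact this.continuous
  have hderiv : ∀ t : ℝ, HasDerivAt (fun s : ℝ => f (x + s • v))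
      ⟪gradient f (x + t • v), v⟫ t := by
    intro t
    have h1 : HasDerivAt (fun s : ℝ => x + s • v) v t := by
      simpa using ((hasDerivAt_id t).smul_const v).const_add x
    have h2 := ((hf (x + t • v)).hasGradientAt).hasFDerivAt
    have h3 := h2.comp_hasDerivAt t h1
    simpa [Function.comp_def] using h3
  have hcont : Continuous fun t : ℝ => ⟪gradient f (x + t • v), v⟫ := by
    exact (hgc.comp (continuous_const.add (continuous_id.smul continuous_const))).inner
      continuous_const
  have hcont2 : Continuous fun t : ℝ => ⟪gradient f x, v⟫ + L * t * ‖v‖ ^ 2 := by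
    fun_prop
  have hint : f (x + v) - f x = ∫ t in (0:ℝ)..1, ⟪gradient f (x + t • v), v⟫ := by
    have h := intervalIntegral.integral_eq_sub_of_hasDerivAt
      (f := fun s : ℝ => f (x + s • v)) (fun t _ => hderiv t)
      (hcont.intervalIntegrable 0 1)
    simp only [one_smul, zero_smul, add_zero] at h
    exact h.symm
  have hmono : (∫ t in (0:ℝ)..1, ⟪gradient f (x + t • v), v⟫)
      ≤ ∫ t in (0:ℝ)..1, (⟪gradient f x, v⟫ + L * t * ‖v‖ ^ 2) := by
    apply intervalIntegral.integral_mono_on (by norm_num)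
      (hcont.intervalIntegrable 0 1) (hcont2.intervalIntegrable 0 1)
    intro t ht
    have h1 : ⟪gradient f (x + t • v) - gradient f x, v⟫ ≤ L * t * ‖v‖ ^ 2 := by
      calc ⟪gradient f (x + t • v) - gradient f x, v⟫
          ≤ ‖gradient f (x + t • v) - gradient f x‖ * ‖v‖ := real_inner_le_norm _ _
        _ ≤ (L * ‖(x + t • v) - x‖) * ‖v‖ := by
            have := hlip (x + t • v) x
            nlinarith [norm_nonneg v]
        _ = L * t * ‖v‖ ^ 2 := by
            rw [add_sub_cancel_left, norm_smul]
            simp only [Real.norm_eq_abs, abs_of_nonneg ht.1]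
            ring
    rw [inner_sub_left] at h1
    linarith
  have hval : (∫ t in (0:ℝ)..1, (⟪gradient f x, v⟫ + L * t * ‖v‖ ^ 2))
      = ⟪gradient f x, v⟫ + L / 2 * ‖v‖ ^ 2 := by
    have h2 : (∫ t in (0:ℝ)..1, L * t * ‖v‖ ^ 2) = L * ‖v‖^2 * ∫ t in (0:ℝ)..1, t := by
      rw [← intervalIntegral.integral_const_mul]
      congr 1; ext t; ring
    rw [intervalIntegral.integral_add (intervalIntegrable_const)
      ((by fun_prop : Continuous fun t : ℝ => L * t * ‖v‖ ^ 2).intervalIntegrable 0 1),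
      h2, integral_id]
    simp; ring
  linarith [hint ▸ (hmono.trans_eq hval)]

set_option maxHeartbeats 1000000 in
/-- With ∇f L-Lipschitz, Q σ-strongly convex, m the smallest eigenvalue of H,
(1−√η)σ + (1+√η)m > 0, and d an η-approximate subproblem solution, every step size
α ∈ (0, min{1, (1−γ)((1−√η)σ+(1+√η)m)/(L(1+√η))}] satisfies the Armijo condition
F(x+αd) ≤ F(x) + αγΔ; in particular backtracking from α = 1 with factor β ∈ (0,1)
terminates finitely with α ≥ min{1, β(1−γ)((1−√η)σ+(1+√η)m)/(L(1+√η))}. -/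
theorem armijo_line_search_bound {n : ℕ}
    (f : EuclideanSpace ℝ (Fin n) → ℝ) (ψ : EuclideanSpace ℝ (Fin n) → EReal)
    (H : EuclideanSpace ℝ (Fin n) →L[ℝ] EuclideanSpace ℝ (Fin n))
    (x d : EuclideanSpace ℝ (Fin n)) (L σ m η γ : ℝ)
    (hf : Differentiable ℝ f) (hL : 0 < L)
    (hlip : ∀ y z, ‖gradient f y - gradient f z‖ ≤ L * ‖y - z‖)
    (hψconv : ConvexE ψ) (hψproper : ProperPsi ψ) (hψclosed : ClosedPsi ψ)
    (hdom : ψ x ≠ ⊤)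
    (hH : SymmCLM H)
    (hσ : 0 < σ) (hsc : StrongConvexE σ (Qm f ψ H x))
    (hm : IsSmallestEigenvalue H m)
    (hη0 : 0 ≤ η) (hη1 : η < 1)
    (hpos : 0 < (1 - Real.sqrt η) * σ + (1 + Real.sqrt η) * m)
    (happrox : Qm f ψ H x d ≤ ((1 - η : ℝ) : EReal) * ⨅ e, Qm f ψ H x e)
    (hγ0 : 0 < γ) (hγ1 : γ < 1) :
    (∀ α : ℝ, 0 < α →
        α ≤ min 1 ((1 - γ) * ((1 - Real.sqrt η) * σ + (1 + Real.sqrt η) * m) /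
            (L * (1 + Real.sqrt η))) →
        Fm f ψ (x + α • d) ≤ Fm f ψ x + ((α * γ : ℝ) : EReal) * Dm f ψ x d) ∧
      ∀ β : ℝ, 0 < β → β < 1 →
        ∃ i : ℕ,
          IsLeast {j : ℕ |
              Fm f ψ (x + β ^ j • d) ≤ Fm f ψ x + ((β ^ j * γ : ℝ) : EReal) * Dm f ψ x d} i ∧
            min 1 (β * (1 - γ) * ((1 - Real.sqrt η) * σ + (1 + Real.sqrt η) * m) /
                (L * (1 + Real.sqrt η))) ≤ β ^ i := by
  classical
  set g := gradient f x with hg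
  set s := Real.sqrt η with hs
  have hs0 : 0 ≤ s := Real.sqrt_nonneg η
  have hs1 : s < 1 := by
    rw [hs, show (1:ℝ) = Real.sqrt 1 by simp]
    exact Real.sqrt_lt_sqrt hη0 hη1
  have hs2 : s ^ 2 = η := Real.sq_sqrt hη0
  have hηle : (0:ℝ) ≤ 1 - η := by linarith
  have h1s : (0:ℝ) < 1 + s := by linarith
  clear_value s
  obtain ⟨px, hpx⟩ : ∃ p : ℝ, ψ x = (p : EReal) :=
    ⟨(ψ x).toReal, (EReal.coe_toReal hdom (hψproper.1 x)).symm⟩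
  have hQ0 : Qm f ψ H x 0 = 0 := by
    simp [Qm, hpx]
  have hQd_le : ∀ e, Qm f ψ H x d ≤ ((1 - η : ℝ) : EReal) * Qm f ψ H x e := by
    intro e
    refine happrox.trans ?_
    exact mul_le_mul_of_nonneg_left (iInf_le _ e) (by exact_mod_cast hηle)
  have hψd_ne_top : ψ (x + d) ≠ ⊤ := by
    intro htop
    have h1 := (hQd_le 0).trans_eq (by rw [hQ0, mul_zero])
    have h2 : Qm f ψ H x d = ⊤ := by
      rw [Qm, htop, hpx, EReal.coe_add_top, EReal.top_sub_coe]
    rw [h2] at h1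
    exact absurd (top_le_iff.mp h1).symm (by simp)
  obtain ⟨pd, hpd⟩ : ∃ p : ℝ, ψ (x + d) = (p : EReal) :=
    ⟨(ψ (x + d)).toReal, (EReal.coe_toReal hψd_ne_top (hψproper.1 _)).symm⟩
  set qd : ℝ := ⟪g, d⟫ + 1 / 2 * ⟪H d, d⟫ + pd - px with hqd_def
  clear_value qd
  have hQd : Qm f ψ H x d = (qd : EReal) := by
    rw [Qm, hpd, hpx, hqd_def, hg]
    norm_cast
  have key : ∀ l : ℝ, 0 < l → l < 1 →
      qd ≤ (1 - η) * (l * qd - σ / 2 * (l * (1 - l)) * ‖d‖ ^ 2) := by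
    intro l hl0 hl1
    have hcomb : l • (x + d) + (1 - l) • x = x + l • d := by module
    have hψl_le : ψ (x + l • d) ≤ ((l * pd + (1 - l) * px : ℝ) : EReal) := by
      have h := hψconv (x + d) x l (1 - l) hl0.le (by linarith) (by ring)
      rw [hcomb, hpd, hpx] at h
      refine h.trans_eq ?_
      norm_cast
    have hψl_ne_top : ψ (x + l • d) ≠ ⊤ :=
      ne_top_of_le_ne_top (EReal.coe_ne_top _) hψl_le
    obtain ⟨pl, hpl⟩ : ∃ p : ℝ, ψ (x + l • d) = (p : EReal) :=
      ⟨(ψ (x + l • d)).toReal, (EReal.coe_toReal hψl_ne_top (hψproper.1 _)).symm⟩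
    set ql : ℝ := l * ⟪g, d⟫ + 1 / 2 * (l ^ 2 * ⟪H d, d⟫) + pl - px with hql_def
    clear_value ql
    have hQl : Qm f ψ H x (l • d) = (ql : EReal) := by
      rw [Qm, hpl, hpx]
      have e1 : ⟪g, l • d⟫ = l * ⟪g, d⟫ := real_inner_smul_right _ _ _
      have e2 : ⟪H (l • d), l • d⟫ = l ^ 2 * ⟪H d, d⟫ := by
        rw [map_smul, real_inner_smul_right, real_inner_smul_left]
        ring
      rw [e1, e2, hql_def, hg]
      norm_cast
    have hsc' := hsc d 0 l (1 - l) hl0.le (by linarith) (by ring)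
    simp only [smul_zero, add_zero] at hsc'
    rw [hQl, hQd, hQ0] at hsc'
    have hnl : ‖l • d‖ ^ 2 = l ^ 2 * ‖d‖ ^ 2 := by
      rw [norm_smul]
      simp only [Real.norm_eq_abs, abs_of_nonneg hl0.le, mul_pow]
    rw [hnl] at hsc'
    have hsc'' : ql - σ / 2 * (l ^ 2 * ‖d‖ ^ 2) ≤ l * (qd - σ / 2 * ‖d‖ ^ 2) := by
      have h9 : ((ql - σ / 2 * (l ^ 2 * ‖d‖ ^ 2) : ℝ) : EReal)
          ≤ ((l * (qd - σ / 2 * ‖d‖ ^ 2) + (1 - l) * (0 - σ / 2 * ‖(0 : EuclideanSpace ℝ (Fin n))‖ ^ 2) : ℝ) : EReal) := by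
        push_cast
        convert hsc' using 2 <;> norm_cast <;> simp
      rw [EReal.coe_le_coe_iff] at h9
      simp only [norm_zero] at h9
      nlinarith [h9]
    have hin : qd ≤ (1 - η) * ql := by
      have h8 := (hQd_le (l • d)).trans_eq (by rw [hQl])
      rw [hQd] at h8
      exact_mod_cast h8
    have hmul := mul_le_mul_of_nonneg_left hsc'' hηle
    nlinarith [hmul, hin]
  have hqd_bound : qd ≤ -((1 - s) * σ) * ‖d‖ ^ 2 / (2 * (1 + s)) := by
    rcases eq_or_lt_of_le hs0 with hse | hspos
    · -- s = 0, hence η = 0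
      have hη : η = 0 := by nlinarith [hs2]
      rw [← hse]
      have hall : ∀ l : ℝ, 0 < l → l < 1 → qd ≤ -(σ * l) * ‖d‖ ^ 2 / 2 := by
        intro l hl0 hl1
        have hk := key l hl0 hl1
        rw [hη] at hk
        have h3 : 0 < 1 - l := by linarith
        have h4 : (1 - l) * qd ≤ (1 - l) * (-(σ * l) * ‖d‖ ^ 2 / 2) := by
          have e : (1 - l) * (-(σ * l) * ‖d‖ ^ 2 / 2) = -(σ / 2 * (l * (1 - l)) * ‖d‖ ^ 2) := by
            ring
          rw [e]
          nlinarith [hk]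
        exact le_of_mul_le_mul_left h4 h3
      apply le_of_forall_pos_le_add
      intro ε hε
      have hpos1 : (0:ℝ) < σ * ‖d‖ ^ 2 + 1 := by positivity
      set l : ℝ := max (1 / 2) (1 - 2 * ε / (σ * ‖d‖ ^ 2 + 1)) with hl_def
      clear_value l
      have hεd : 0 < 2 * ε / (σ * ‖d‖ ^ 2 + 1) := by positivity
      have hl0 : 0 < l := by
        rw [hl_def]
        exact lt_of_lt_of_le (by norm_num) (le_max_left _ _)
      have hl1 : l < 1 := by
        rw [hl_def]
        apply max_lt (by norm_num)
        linarith
      have h4 := hall l hl0 hl1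
      have h5 : 1 - l ≤ 2 * ε / (σ * ‖d‖ ^ 2 + 1) := by
        have h5' : 1 - 2 * ε / (σ * ‖d‖ ^ 2 + 1) ≤ l := by
          rw [hl_def]
          exact le_max_right _ _
        linarith
      have h6 : (1 - l) * (σ * ‖d‖ ^ 2) ≤ 2 * ε := by
        rw [le_div_iff₀ hpos1] at h5
        nlinarith [hl1, norm_nonneg d, hσ.le]
      have h7 : -(σ * l) * ‖d‖ ^ 2 / 2 ≤ -((1 - 0) * σ) * ‖d‖ ^ 2 / (2 * (1 + 0)) + ε := by
        rw [div_le_iff₀ (by norm_num : (0:ℝ) < 2)]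
        nlinarith [h6]
      exact h4.trans h7
    · -- s > 0: plug l = 1/(1+s)
      have hl0 : (0:ℝ) < 1 / (1 + s) := by positivity
      have hl1 : 1 / (1 + s) < 1 := by
        rw [div_lt_one h1s]; linarith
      have hk := key (1 / (1 + s)) hl0 hl1
      rw [← hs2] at hk
      have e1 : (1 / (1 + s)) * (1 - 1 / (1 + s)) = s / (1 + s) ^ 2 := by
        field_simp
        try ring
        try tauto
      rw [e1] at hk
      have e2 : (1 - s ^ 2) * (1 / (1 + s) * qd - σ / 2 * (s / (1 + s) ^ 2) * ‖d‖ ^ 2)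
          = (1 - s) * qd - σ / 2 * s * (1 - s) / (1 + s) * ‖d‖ ^ 2 := by
        field_simp
        ring
      rw [e2] at hk
      have hk' : s * qd ≤ s * (-((1 - s) * σ) * ‖d‖ ^ 2 / (2 * (1 + s))) := by
        have e3 : s * (-((1 - s) * σ) * ‖d‖ ^ 2 / (2 * (1 + s)))
            = -(σ / 2 * s * (1 - s) / (1 + s) * ‖d‖ ^ 2) := by
          field_simp
        rw [e3]
        nlinarith [hk]
      exact le_of_mul_le_mul_left hk' hspos
  -- Δ real value and bound
  set Dr : ℝ := ⟪g, d⟫ + pd - px with hDr_def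
  clear_value Dr
  have hDm : Dm f ψ x d = (Dr : EReal) := by
    rw [Dm, hpd, hpx, hDr_def, hg]
    norm_cast
  have hHdd : m * ‖d‖ ^ 2 ≤ ⟪H d, d⟫ := by
    rcases eq_or_ne d 0 with rfl | hd0
    · simp
    · have hdn : ‖d‖ ≠ 0 := norm_ne_zero_iff.mpr hd0
      have hu : ‖(‖d‖⁻¹ • d : EuclideanSpace ℝ (Fin n))‖ = 1 := by
        rw [norm_smul, Real.norm_eq_abs, abs_of_nonneg (by positivity),
          inv_mul_cancel₀ hdn]
      have hle := hm.2 ⟨‖d‖⁻¹ • d, hu, rfl⟩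
      rw [map_smul, real_inner_smul_left, real_inner_smul_right] at hle
      have hd2 : 0 < ‖d‖ ^ 2 := pow_pos (norm_pos_iff.mpr hd0) 2
      have hle2 := mul_le_mul_of_nonneg_left hle hd2.le
      have h2 : ‖d‖ ^ 2 * (‖d‖⁻¹ * (‖d‖⁻¹ * ⟪H d, d⟫)) = ⟪H d, d⟫ := by
        field_simp
      rw [h2] at hle2
      nlinarith [hle2]
  set C : ℝ := (1 - s) * σ + (1 + s) * m with hC_def
  clear_value C
  have hΔ : Dr ≤ -C * ‖d‖ ^ 2 / (2 * (1 + s)) := by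
    have h1 : Dr = qd - 1 / 2 * ⟪H d, d⟫ := by rw [hDr_def, hqd_def]; ring
    rw [h1, hC_def, le_div_iff₀ (by positivity)]
    rw [le_div_iff₀ (by positivity)] at hqd_bound
    have h2 := mul_le_mul_of_nonneg_left hHdd h1s.le
    nlinarith [hqd_bound, h2]
  -- PART 1: the Armijo condition
  have part1 : ∀ α : ℝ, 0 < α →
      α ≤ min 1 ((1 - γ) * C / (L * (1 + s))) →
      Fm f ψ (x + α • d) ≤ Fm f ψ x + ((α * γ : ℝ) : EReal) * Dm f ψ x d := by
    intro α hα0 hαle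
    have hα1 : α ≤ 1 := hαle.trans (min_le_left _ _)
    have hα2 : α ≤ (1 - γ) * C / (L * (1 + s)) := hαle.trans (min_le_right _ _)
    have hdesc := descent_aux f L hL.le hf hlip x (α • d)
    rw [real_inner_smul_right, norm_smul, Real.norm_eq_abs, abs_of_nonneg hα0.le,
      mul_pow, ← hg] at hdesc
    have hcomb : α • (x + d) + (1 - α) • x = x + α • d := by module
    have hψα_le : ψ (x + α • d) ≤ ((α * pd + (1 - α) * px : ℝ) : EReal) := by
      have h := hψconv (x + d) x α (1 - α) hα0.le (by linarith) (by ring)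
      rw [hcomb, hpd, hpx] at h
      refine h.trans_eq ?_
      norm_cast
    -- the real inequality
    have hreal : f (x + α • d) + (α * pd + (1 - α) * px)
        ≤ (f x + px) + (α * γ) * Dr := by
      have hstep : (1 - γ) * Dr + L * α / 2 * ‖d‖ ^ 2 ≤ 0 := by
        have e1 : (1 - γ) * Dr ≤ -((1 - γ) * C * ‖d‖ ^ 2 / (2 * (1 + s))) := by
          rw [← neg_div, le_div_iff₀ (by positivity)]
          rw [le_div_iff₀ (by positivity)] at hΔ
          nlinarith [mul_le_mul_of_nonneg_left hΔ (by linarith : (0:ℝ) ≤ 1 - γ)]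
        have e2 : L * α / 2 * ‖d‖ ^ 2 ≤ (1 - γ) * C * ‖d‖ ^ 2 / (2 * (1 + s)) := by
          rw [le_div_iff₀ (by positivity)]
          have h3 : α * (L * (1 + s)) ≤ (1 - γ) * C := (le_div_iff₀ (by positivity)).mp hα2
          nlinarith [mul_le_mul_of_nonneg_left h3 (sq_nonneg ‖d‖)]
        linarith [e1, e2]
      have hmulstep := mul_nonpos_of_nonneg_of_nonpos hα0.le hstep
      have hDr2 : α * Dr = α * ⟪g, d⟫ + α * pd - α * px := by rw [hDr_def]; ring
      nlinarith [hdesc, hmulstep, hDr2]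
    calc Fm f ψ (x + α • d) = ((f (x + α • d) : ℝ) : EReal) + ψ (x + α • d) := rfl
      _ ≤ ((f (x + α • d) : ℝ) : EReal) + ((α * pd + (1 - α) * px : ℝ) : EReal) :=
          add_le_add le_rfl hψα_le
      _ = ((f (x + α • d) + (α * pd + (1 - α) * px) : ℝ) : EReal) := by norm_cast
      _ ≤ (((f x + px) + (α * γ) * Dr : ℝ) : EReal) := by
          exact_mod_cast hreal
      _ = Fm f ψ x + ((α * γ : ℝ) : EReal) * Dm f ψ x d := by
          rw [Fm, hpx, hDm]
          norm_cast
  refine ⟨part1, ?_⟩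
  -- PART 2: backtracking
  intro β hβ0 hβ1
  set a : ℝ := (1 - γ) * C / (L * (1 + s)) with ha_def
  have ha0 : 0 < a := by
    rw [ha_def]
    have : 0 < (1 - γ) * C := by nlinarith [hpos, hγ1]
    positivity
  have hmin0 : 0 < min 1 a := lt_min one_pos ha0
  have hS : ∀ j : ℕ, β ^ j ≤ min 1 a →
      Fm f ψ (x + β ^ j • d) ≤ Fm f ψ x + ((β ^ j * γ : ℝ) : EReal) * Dm f ψ x d :=
    fun j hj => part1 _ (pow_pos hβ0 j) hj
  obtain ⟨j0, hj0⟩ := exists_pow_lt_of_lt_one hmin0 hβ1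
  have hne : {j : ℕ |
      Fm f ψ (x + β ^ j • d) ≤ Fm f ψ x + ((β ^ j * γ : ℝ) : EReal) * Dm f ψ x d}.Nonempty :=
    ⟨j0, hS j0 hj0.le⟩
  set S := {j : ℕ |
      Fm f ψ (x + β ^ j • d) ≤ Fm f ψ x + ((β ^ j * γ : ℝ) : EReal) * Dm f ψ x d} with hS_def
  refine ⟨sInf S, ⟨Nat.sInf_mem hne, fun j hj => Nat.sInf_le hj⟩, ?_⟩
  rcases Nat.eq_zero_or_pos (sInf S) with h0 | hpos'
  · rw [h0, pow_zero]
    exact min_le_left _ _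
  · obtain ⟨k, hk⟩ : ∃ k, sInf S = k + 1 := ⟨sInf S - 1, by omega⟩
    have hkS : k ∉ S := fun hkmem => by
      have := Nat.sInf_le hkmem
      omega
    have hk1 : β ^ k ≤ 1 := pow_le_one₀ hβ0.le hβ1.le
    have hka : ¬ (β ^ k ≤ min 1 a) := fun hle => hkS (hS k hle)
    push_neg at hka
    have hak : a < β ^ k := by
      rcases min_cases 1 a with ⟨hmeq, hle⟩ | ⟨hmeq, hle⟩
      · rw [hmeq] at hka; linarith
      · rw [hmeq] at hka; exact hka
    have : β * a ≤ β ^ sInf S := by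
      rw [hk, pow_succ, mul_comm (β ^ k) β]
      nlinarith [hak, hβ0]
    refine le_trans ?_ this
    have : β * (1 - γ) * C / (L * (1 + s)) = β * a := by
      rw [ha_def]; ring
    rw [this]
    exact min_le_right _ _
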